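/- L is solvable if and only if there exists a nonzero graded ideal I of L whose centraliser C_L(I) = {x ∈ L : ⁅x, u⁆ = 0 for all u ∈ I} is nonzero. -/

import Mathlib

open Submodule


/-- `L` is a Lie algebra graded over the positive integers and generated by `L_1`. -/
structure IsGradedLieAlgebra (F : Type*) [Field F] (L : Type*) [LieRing L] [LieAlgebra F L]
    (Lc : ℕ → Submodule F L) : Prop where
  zero_bot : Lc 0 = ⊥
  internal : DirectSum.IsInternal Lc
  lie_mem : ∀ i j : ℕ, ∀ x ∈ Lc i, ∀ y ∈ Lc j, ⁅x, y⁆ ∈ Lc (i + j)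
  gen : LieSubalgebra.lieSpan F L (Lc 1 : Set L) = ⊤

/-- A Lie ideal `I` of `L` is graded if `I = ⊕_{i ≥ 1} (I ∩ L_i)`. -/
def IsGradedIdeal (F : Type*) [Field F] {L : Type*} [LieRing L] [LieAlgebra F L]
    (Lc : ℕ → Submodule F L) (I : LieIdeal F L) : Prop :=
  (I : Submodule F L) = ⨆ i : ℕ, ⨆ _ : 1 ≤ i, ((I : Submodule F L) ⊓ Lc i)

section Aux

variable {F : Type*} [Field F] {L : Type*} [LieRing L] [LieAlgebra F L] {Lc : ℕ → Submodule F L}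

/-- Bracket on the right, as a linear map. -/
def brkt (F : Type*) [Field F] {L : Type*} [LieRing L] [LieAlgebra F L] (u : L) : L →ₗ[F] L where
  toFun z := ⁅z, u⁆
  map_add' a b := add_lie a b u
  map_smul' c a := smul_lie c a u

/-- Projection onto the `i`-th graded component. -/
noncomputable def gradProj (Lc : ℕ → Submodule F L) (h : DirectSum.IsInternal Lc) (i : ℕ) :
    L →ₗ[F] L where
  toFun z := (((LinearEquiv.ofBijective (DirectSum.coeLinearMap Lc) h).symm z) i : L)
  map_add' a b := by
    show (((LinearEquiv.ofBijective (DirectSum.coeLinearMap Lc) h).symm (a + b)) i : L) = _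
    rw [map_add, DirectSum.add_apply, Submodule.coe_add]
  map_smul' c a := by
    show (((LinearEquiv.ofBijective (DirectSum.coeLinearMap Lc) h).symm (c • a)) i : L) = _
    rw [map_smul, DirectSum.smul_apply, SetLike.val_smul]
    rfl

lemma gradProj_mem (h : DirectSum.IsInternal Lc) (i : ℕ) (z : L) : gradProj Lc h i z ∈ Lc i :=
  SetLike.coe_mem _

lemma gradProj_of_mem_same (h : DirectSum.IsInternal Lc) {i : ℕ} {z : L} (hz : z ∈ Lc i) :
    gradProj Lc h i z = z := by
  show (((LinearEquiv.ofBijective (DirectSum.coeLinearMap Lc) h).symm z) i : L) = z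
  rw [h.ofBijective_coeLinearMap_of_mem hz]

lemma gradProj_of_mem_ne (h : DirectSum.IsInternal Lc) {i j : ℕ} {z : L} (hz : z ∈ Lc i)
    (hij : i ≠ j) : gradProj Lc h j z = 0 := by
  show (((LinearEquiv.ofBijective (DirectSum.coeLinearMap Lc) h).symm z) j : L) = 0
  rw [h.ofBijective_coeLinearMap_of_mem_ne hij hz]
  rfl

lemma gradProj_sum (h : DirectSum.IsInternal Lc) (z : L) :
    ∃ s : Finset ℕ, (∀ i ∉ s, gradProj Lc h i z = 0) ∧ z = ∑ i ∈ s, gradProj Lc h i z := by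
  classical
  set e := LinearEquiv.ofBijective (DirectSum.coeLinearMap Lc) h with he
  refine ⟨(e.symm z).support, ?_, ?_⟩
  · intro i hi
    show ((e.symm z) i : L) = 0
    rw [DFinsupp.notMem_support_iff.mp hi]
    rfl
  · have hc : ∀ i ∈ (e.symm z).support,
        gradProj Lc h i z = ((e.symm z) i : L) := fun _ _ => rfl
    rw [Finset.sum_congr rfl hc]
    calc z = e (e.symm z) := (e.apply_symm_apply z).symm
      _ = e (∑ i ∈ (e.symm z).support, DirectSum.of (fun i => Lc i) i ((e.symm z) i)) := by
          rw [DirectSum.sum_support_of]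
      _ = ∑ i ∈ (e.symm z).support, ((e.symm z) i : L) := by
          rw [← LinearEquiv.coe_coe e, map_sum]
          exact Finset.sum_congr rfl fun i _ => DirectSum.coeLinearMap_of Lc i _

lemma mem_iSup_of_gradProj_mem (h : DirectSum.IsInternal Lc) {Q : ℕ → Submodule F L} {z : L}
    (hz : ∀ i, gradProj Lc h i z ∈ Q i) : z ∈ ⨆ i, Q i := by
  obtain ⟨s, -, hsum⟩ := gradProj_sum h z
  rw [hsum]
  exact Submodule.sum_mem _ fun i _ => Submodule.mem_iSup_of_mem i (hz i)

lemma gradProj_mem_of_mem_iSup (h : DirectSum.IsInternal Lc) {P : ℕ → Submodule F L}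
    (hP : ∀ i, P i ≤ Lc i) {z : L} (hz : z ∈ ⨆ i, P i) (i : ℕ) :
    gradProj Lc h i z ∈ P i := by
  refine Submodule.iSup_induction P (motive := fun w => gradProj Lc h i w ∈ P i) hz ?_ ?_ ?_
  · intro j x hx
    rcases eq_or_ne j i with rfl | hne
    · rwa [gradProj_of_mem_same h (hP j hx)]
    · rw [gradProj_of_mem_ne h (hP j hx) hne]; exact zero_mem _
  · show gradProj Lc h i 0 ∈ P i
    rw [map_zero]; exact zero_mem _
  · intro a b ha hb
    show gradProj Lc h i (a + b) ∈ P i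
    rw [map_add]; exact add_mem ha hb

lemma gradProj_lie (h : DirectSum.IsInternal Lc)
    (hlie : ∀ i j : ℕ, ∀ x ∈ Lc i, ∀ y ∈ Lc j, ⁅x, y⁆ ∈ Lc (i + j))
    {u : L} {j : ℕ} (hu : u ∈ Lc j) (z : L) (i : ℕ) :
    gradProj Lc h (i + j) ⁅z, u⁆ = ⁅gradProj Lc h i z, u⁆ := by
  obtain ⟨s, hs0, hsum⟩ := gradProj_sum h z
  have hzu : ⁅z, u⁆ = ∑ m ∈ s, ⁅gradProj Lc h m z, u⁆ := by
    conv_lhs => rw [hsum]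
    exact map_sum (brkt F u) (fun m => gradProj Lc h m z) s
  rw [hzu, map_sum, Finset.sum_eq_single i]
  · exact gradProj_of_mem_same h (hlie i j _ (gradProj_mem h i z) u hu)
  · intro m _ hmi
    exact gradProj_of_mem_ne h (hlie m j _ (gradProj_mem h m z) u hu) (by omega)
  · intro hi
    rw [hs0 i hi, zero_lie, map_zero]

lemma iSup_natDrop (A : ℕ → Submodule F L) (h0 : A 0 = ⊥) :
    (⨆ i, ⨆ _ : 1 ≤ i, A i) = ⨆ i, A i := by
  apply le_antisymm
  · exact iSup_le fun i => iSup_le fun _ => le_iSup A i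
  · refine iSup_le fun i => ?_
    cases i with
    | zero => rw [h0]; exact bot_le
    | succ n =>
        exact le_iSup_of_le (n + 1) (le_iSup_of_le (Nat.succ_le_succ (Nat.zero_le n)) le_rfl)

lemma isGradedIdeal_iff' (h0 : Lc 0 = ⊥) {I : LieIdeal F L} :
    IsGradedIdeal F Lc I ↔
      LieSubmodule.toSubmodule I = ⨆ i, (LieSubmodule.toSubmodule I ⊓ Lc i) := by
  have hrfl : IsGradedIdeal F Lc I
      = (LieSubmodule.toSubmodule I
          = ⨆ i, ⨆ _ : 1 ≤ i, (LieSubmodule.toSubmodule I ⊓ Lc i)) := rfl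
  rw [hrfl, iSup_natDrop (fun i => LieSubmodule.toSubmodule I ⊓ Lc i)
    (by show LieSubmodule.toSubmodule I ⊓ Lc 0 = ⊥; rw [h0, inf_bot_eq])]

lemma lie_isGraded (hlie : ∀ i j : ℕ, ∀ x ∈ Lc i, ∀ y ∈ Lc j, ⁅x, y⁆ ∈ Lc (i + j))
    {I J : LieIdeal F L}
    (hI : LieSubmodule.toSubmodule I = ⨆ i, (LieSubmodule.toSubmodule I ⊓ Lc i))
    (hJ : LieSubmodule.toSubmodule J = ⨆ i, (LieSubmodule.toSubmodule J ⊓ Lc i)) :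
    LieSubmodule.toSubmodule (⁅I, J⁆ : LieIdeal F L)
      = ⨆ i, (LieSubmodule.toSubmodule (⁅I, J⁆ : LieIdeal F L) ⊓ Lc i) := by
  refine le_antisymm ?_ (iSup_le fun i => inf_le_left)
  set S := ⨆ i, (LieSubmodule.toSubmodule (⁅I, J⁆ : LieIdeal F L) ⊓ Lc i) with hS
  rw [LieSubmodule.lieIdeal_oper_eq_linear_span', Submodule.span_le]
  rintro z ⟨x, hx, y, hy, rfl⟩
  show ⁅x, y⁆ ∈ S
  have hx' : x ∈ ⨆ i, (LieSubmodule.toSubmodule I ⊓ Lc i) := by rw [← hI]; exact hx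
  have hy' : y ∈ ⨆ i, (LieSubmodule.toSubmodule J ⊓ Lc i) := by rw [← hJ]; exact hy
  clear hx hy
  refine Submodule.iSup_induction (fun i => LieSubmodule.toSubmodule I ⊓ Lc i)
    (motive := fun x => ⁅x, y⁆ ∈ S) hx' ?_ ?_ ?_
  · intro i x hxi
    refine Submodule.iSup_induction (fun j => LieSubmodule.toSubmodule J ⊓ Lc j)
      (motive := fun w => ⁅x, w⁆ ∈ S) hy' ?_ ?_ ?_
    · intro j w hwj
      rw [hS]
      have h1 : x ∈ LieSubmodule.toSubmodule I ⊓ Lc i := hxi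
      have h2 : w ∈ LieSubmodule.toSubmodule J ⊓ Lc j := hwj
      exact Submodule.mem_iSup_of_mem (i + j)
        ⟨LieSubmodule.lie_mem_lie h1.1 h2.1, hlie i j x h1.2 w h2.2⟩
    · show ⁅x, (0 : L)⁆ ∈ S
      rw [lie_zero]; exact zero_mem _
    · intro a b ha hb
      show ⁅x, a + b⁆ ∈ S
      rw [lie_add]; exact add_mem ha hb
  · show ⁅(0 : L), y⁆ ∈ S
    rw [zero_lie]; exact zero_mem _
  · intro a b ha hb
    show ⁅a + b, y⁆ ∈ S
    rw [add_lie]; exact add_mem ha hb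

end Aux

/-- if `L` is just infinite-dimensional, then `L` is solvable if and only
if there is a nonzero graded ideal `I` of `L` whose centraliser `C_L(I)` is nonzero. -/
theorem stmt_18 (F : Type*) [Field F] (L : Type*) [LieRing L] [LieAlgebra F L]
    (Lc : ℕ → Submodule F L) (hL : IsGradedLieAlgebra F L Lc)
    (hinf : ¬ Module.Finite F L)
    (hJI : ∀ I : LieIdeal F L, IsGradedIdeal F Lc I → I ≠ ⊥ →
      Module.Finite F (L ⧸ (I : Submodule F L))) :
    LieAlgebra.IsSolvable L ↔
      ∃ I : LieIdeal F L, IsGradedIdeal F Lc I ∧ I ≠ ⊥ ∧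
        ∃ x : L, x ≠ 0 ∧ ∀ u ∈ I, ⁅x, u⁆ = 0 := by
  classical
  have h0 := hL.zero_bot
  have hint := hL.internal
  have hlie := hL.lie_mem
  have hnt : Nontrivial L := by
    by_contra hns
    rw [not_nontrivial_iff_subsingleton] at hns
    exact hinf (Module.Finite.of_surjective (⊥ : Submodule F L).subtype
      fun x => ⟨0, Subsingleton.elim _ _⟩)
  constructor
  · intro hsolv
    have hgr : ∀ n, LieSubmodule.toSubmodule (LieAlgebra.derivedSeries F L n)
        = ⨆ i, (LieSubmodule.toSubmodule (LieAlgebra.derivedSeries F L n) ⊓ Lc i) := by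
      intro n
      induction n with
      | zero =>
          rw [show LieAlgebra.derivedSeries F L 0 = ⊤ from rfl, LieSubmodule.top_toSubmodule]
          simp only [top_inf_eq]
          exact hint.submodule_iSup_eq_top.symm
      | succ n ih =>
          have hsucc : LieAlgebra.derivedSeries F L (n + 1)
              = ⁅LieAlgebra.derivedSeries F L n, LieAlgebra.derivedSeries F L n⁆ := by
            simp [LieAlgebra.derivedSeries_def]
          rw [hsucc]
          exact lie_isGraded hlie ih ih
    obtain ⟨k, hk⟩ := (LieAlgebra.isSolvable_iff F L).mp hsolv
    have hmin : ∀ k, LieAlgebra.derivedSeries F L k = ⊥ →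
        ∃ m, LieAlgebra.derivedSeries F L m ≠ ⊥ ∧ LieAlgebra.derivedSeries F L (m + 1) = ⊥ := by
      intro k
      induction k with
      | zero =>
          intro hk0
          exfalso
          obtain ⟨w, hw⟩ := exists_ne (0 : L)
          have hwt : w ∈ LieAlgebra.derivedSeries F L 0 := LieSubmodule.mem_top w
          rw [hk0] at hwt
          exact hw ((LieSubmodule.mem_bot w).mp hwt)
      | succ k ih =>
          intro hk1
          by_cases hc : LieAlgebra.derivedSeries F L k = ⊥
          · exact ih hc
          · exact ⟨k, hc, hk1⟩
    obtain ⟨m, hm, hm1⟩ := hmin k hk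
    refine ⟨LieAlgebra.derivedSeries F L m, (isGradedIdeal_iff' h0).mpr (hgr m), hm, ?_⟩
    obtain ⟨x, hxmem, hx0⟩ :=
      (Submodule.ne_bot_iff (LieSubmodule.toSubmodule (LieAlgebra.derivedSeries F L m))).mp
        (by rwa [Ne, LieSubmodule.toSubmodule_eq_bot])
    refine ⟨x, hx0, fun u hu => ?_⟩
    have hxu : ⁅x, u⁆ ∈ LieAlgebra.derivedSeries F L (m + 1) := by
      rw [show LieAlgebra.derivedSeries F L (m + 1)
          = ⁅LieAlgebra.derivedSeries F L m, LieAlgebra.derivedSeries F L m⁆ from by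
        simp [LieAlgebra.derivedSeries_def]]
      exact LieSubmodule.lie_mem_lie (M := L) (N := LieAlgebra.derivedSeries F L m) hxmem hu
    rw [hm1] at hxu
    exact (LieSubmodule.mem_bot _).mp hxu
  · rintro ⟨I, hIgr, hIbot, x, hx0, hxc⟩
    have hI : LieSubmodule.toSubmodule I = ⨆ i, (LieSubmodule.toSubmodule I ⊓ Lc i) :=
      (isGradedIdeal_iff' h0).mp hIgr
    let Csub : Submodule F L :=
      { carrier := {z | ∀ u ∈ I, ⁅z, u⁆ = 0}
        add_mem' := fun {a b} ha hb u hu => by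
          rw [add_lie, ha u hu, hb u hu, add_zero]
        zero_mem' := fun u hu => zero_lie u
        smul_mem' := fun c a ha u hu => by rw [smul_lie, ha u hu, smul_zero] }
    let C : LieIdeal F L :=
      { Csub with
        lie_mem := fun {y} {z} hz => by
          intro u hu
          have h1 : ⁅z, u⁆ = 0 := hz u hu
          have h2 : ⁅z, ⁅y, u⁆⁆ = 0 := hz _ (I.lie_mem hu)
          rw [lie_lie, h1, h2, lie_zero, sub_zero] }
    have hC : LieSubmodule.toSubmodule C = ⨆ i, (LieSubmodule.toSubmodule C ⊓ Lc i) := by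
      refine le_antisymm ?_ (iSup_le fun i => inf_le_left)
      intro z hz
      refine mem_iSup_of_gradProj_mem hint fun i => ?_
      refine Submodule.mem_inf.mpr ⟨?_, gradProj_mem hint i z⟩
      show ∀ u ∈ I, ⁅gradProj Lc hint i z, u⁆ = 0
      intro u hu
      have hu' : u ∈ ⨆ j, (LieSubmodule.toSubmodule I ⊓ Lc j) := by rw [← hI]; exact hu
      refine Submodule.iSup_induction (fun j => LieSubmodule.toSubmodule I ⊓ Lc j)
        (motive := fun u => ⁅gradProj Lc hint i z, u⁆ = 0) hu' ?_ ?_ ?_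
      · intro j u huj
        have huj' : u ∈ LieSubmodule.toSubmodule I ⊓ Lc j := huj
        rw [← gradProj_lie hint hlie huj'.2 z i]
        have hzu : ⁅z, u⁆ = 0 := hz u huj'.1
        rw [hzu, map_zero]
      · exact lie_zero _
      · intro a b ha hb
        rw [lie_add, ha, hb, add_zero]
    have hxC : x ∈ C := hxc
    have hCbot : C ≠ ⊥ := by
      intro hCb
      rw [hCb] at hxC
      exact hx0 ((LieSubmodule.mem_bot x).mp hxC)
    set J : LieIdeal F L := I ⊓ C with hJdef
    have hJ : LieSubmodule.toSubmodule J = ⨆ i, (LieSubmodule.toSubmodule J ⊓ Lc i) := by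
      refine le_antisymm ?_ (iSup_le fun i => inf_le_left)
      intro z hz
      have hz' : z ∈ LieSubmodule.toSubmodule I ⊓ LieSubmodule.toSubmodule C := by
        rw [← LieSubmodule.inf_toSubmodule]; exact hz
      have hzI : z ∈ ⨆ i, (LieSubmodule.toSubmodule I ⊓ Lc i) := by rw [← hI]; exact hz'.1
      have hzC : z ∈ ⨆ i, (LieSubmodule.toSubmodule C ⊓ Lc i) := by rw [← hC]; exact hz'.2
      refine mem_iSup_of_gradProj_mem hint fun i => ?_
      have h1 : gradProj Lc hint i z ∈ LieSubmodule.toSubmodule I ⊓ Lc i :=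
        gradProj_mem_of_mem_iSup hint (fun i => inf_le_right) hzI i
      have h2 : gradProj Lc hint i z ∈ LieSubmodule.toSubmodule C ⊓ Lc i :=
        gradProj_mem_of_mem_iSup hint (fun i => inf_le_right) hzC i
      refine Submodule.mem_inf.mpr ⟨?_, h1.2⟩
      rw [hJdef, LieSubmodule.inf_toSubmodule]
      exact Submodule.mem_inf.mpr ⟨h1.1, h2.1⟩
    have hJbot : J ≠ ⊥ := by
      intro hJb
      have hfinI : Module.Finite F (L ⧸ (LieSubmodule.toSubmodule I)) := hJI I hIgr hIbot
      let f : Csub →ₗ[F] L ⧸ (LieSubmodule.toSubmodule I) :=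
        (LieSubmodule.toSubmodule I).mkQ.comp Csub.subtype
      have hfinj : Function.Injective f := by
        rw [← LinearMap.ker_eq_bot, LinearMap.ker_eq_bot']
        rintro ⟨a, haC⟩ hfa
        have haI : a ∈ LieSubmodule.toSubmodule I := by
          have h' : a ∈ LinearMap.ker (LieSubmodule.toSubmodule I).mkQ := hfa
          rwa [Submodule.ker_mkQ] at h'
        have haJ : a ∈ J := by
          rw [hJdef, LieSubmodule.mem_inf]
          exact ⟨haI, haC⟩
        rw [hJb] at haJ
        exact Subtype.ext ((LieSubmodule.mem_bot a).mp haJ)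
      have hfinC : Module.Finite F Csub := Module.Finite.of_injective f hfinj
      have hfinQC : Module.Finite F (L ⧸ Csub) := hJI C ((isGradedIdeal_iff' h0).mpr hC) hCbot
      apply hinf
      rw [← Module.rank_lt_aleph0_iff, ← Submodule.rank_quotient_add_rank Csub]
      exact Cardinal.add_lt_aleph0 (Module.rank_lt_aleph0_iff.mpr hfinQC)
        (Module.rank_lt_aleph0_iff.mpr hfinC)
    haveI hfinQJ : Module.Finite F (L ⧸ (LieSubmodule.toSubmodule J)) :=
      hJI J ((isGradedIdeal_iff' h0).mpr hJ) hJbot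
    set q := (LieSubmodule.toSubmodule J).mkQ with hq
    set K : ℕ → Submodule F (L ⧸ (LieSubmodule.toSubmodule J)) :=
      fun i => (Lc i).map q with hK
    have hind : iSupIndep K := by
      rw [iSupIndep_def]
      intro i
      rw [Submodule.disjoint_def]
      intro w hwi hwrest
      obtain ⟨y, hy, rfl⟩ := Submodule.mem_map.mp hwi
      have hmapsup : (⨆ j, ⨆ _ : j ≠ i, K j) = Submodule.map q (⨆ j, ⨆ _ : j ≠ i, Lc j) := by
        rw [Submodule.map_iSup]
        exact iSup_congr fun j => (Submodule.map_iSup _ _).symm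
      rw [hmapsup] at hwrest
      obtain ⟨v, hv, hqv⟩ := Submodule.mem_map.mp hwrest
      have hyv : y - v ∈ LieSubmodule.toSubmodule J := by
        have : y - v ∈ LinearMap.ker q := by
          rw [LinearMap.mem_ker, map_sub, hqv, sub_self]
        rwa [hq, Submodule.ker_mkQ] at this
      have hcomp : gradProj Lc hint i (y - v) ∈ LieSubmodule.toSubmodule J :=
        (gradProj_mem_of_mem_iSup hint (fun j => inf_le_right)
          (by rw [← hJ]; exact hyv) i).1
      have hgy : gradProj Lc hint i y = y := gradProj_of_mem_same hint hy
      have hgv : gradProj Lc hint i v = 0 := by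
        refine Submodule.iSup_induction (fun j => ⨆ _ : j ≠ i, Lc j)
          (motive := fun v => gradProj Lc hint i v = 0) hv ?_ ?_ ?_
        · intro j u hu
          rcases eq_or_ne j i with rfl | hji
          · have hu' : u ∈ (⨆ _ : j ≠ j, Lc j) := hu
            rw [iSup_neg (fun hcon => hcon rfl)] at hu'
            rw [Submodule.mem_bot] at hu'
            rw [hu', map_zero]
          · have hu' : u ∈ (⨆ _ : j ≠ i, Lc j) := hu
            rw [iSup_pos hji] at hu'
            exact gradProj_of_mem_ne hint hu' hji
        · exact map_zero _
        · intro a b ha hb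
          rw [map_add, ha, hb, add_zero]
      rw [map_sub, hgy, hgv, sub_zero] at hcomp
      have hyk : y ∈ LinearMap.ker q := by rw [hq, Submodule.ker_mkQ]; exact hcomp
      exact LinearMap.mem_ker.mp hyk
    haveI hfint : Fintype {i // K i ≠ ⊥} := hind.fintypeNeBotOfFiniteDimensional
    have hSfin : {i : ℕ | K i ≠ ⊥}.Finite :=
      Set.finite_coe_iff.mp (@Finite.of_fintype _ hfint)
    obtain ⟨N, hN⟩ := hSfin.bddAbove
    have hLcJ : ∀ i, N < i → Lc i ≤ LieSubmodule.toSubmodule J := by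
      intro i hNi
      by_contra hnot
      obtain ⟨w, hw, hwJ⟩ := SetLike.not_le_iff_exists.mp hnot
      have hKi : K i ≠ ⊥ := by
        rw [Submodule.ne_bot_iff]
        refine ⟨q w, Submodule.mem_map_of_mem hw, ?_⟩
        intro hqw
        apply hwJ
        have hwk : w ∈ LinearMap.ker q := LinearMap.mem_ker.mpr hqw
        rwa [hq, Submodule.ker_mkQ] at hwk
      exact absurd (hN hKi) (by omega)
    set T : ℕ → Submodule F L := fun n => ⨆ p : {i : ℕ // n ≤ i}, Lc p with hT
    have hTop : (⊤ : Submodule F L) ≤ T 1 := by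
      rw [← hint.submodule_iSup_eq_top]
      refine iSup_le fun i => ?_
      cases i with
      | zero => rw [h0]; exact bot_le
      | succ n => exact le_iSup (fun p : {i : ℕ // 1 ≤ i} => Lc p) ⟨n + 1, by omega⟩
    have hlcs : ∀ n,
        LieSubmodule.toSubmodule (LieModule.lowerCentralSeries F L L n) ≤ T (n + 1) := by
      intro n
      induction n with
      | zero =>
          rw [show LieModule.lowerCentralSeries F L L 0 = ⊤ from rfl,
            LieSubmodule.top_toSubmodule]
          exact hTop
      | succ n ih =>
          rw [show LieModule.lowerCentralSeries F L L (n + 1)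
              = ⁅(⊤ : LieIdeal F L), LieModule.lowerCentralSeries F L L n⁆ from
            LieModule.lowerCentralSeries_succ F L L n]
          rw [LieSubmodule.lieIdeal_oper_eq_linear_span', Submodule.span_le]
          rintro z ⟨yy, -, m, hm, rfl⟩
          show ⁅yy, m⁆ ∈ T (n + 1 + 1)
          have hys : yy ∈ T 1 := hTop trivial
          have hms : m ∈ T (n + 1) := ih hm
          refine Submodule.iSup_induction (fun p : {i : ℕ // 1 ≤ i} => Lc p)
            (motive := fun w => ⁅w, m⁆ ∈ T (n + 1 + 1)) hys ?_ ?_ ?_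
          · rintro ⟨j, hj⟩ a ha
            refine Submodule.iSup_induction (fun p : {i : ℕ // n + 1 ≤ i} => Lc p)
              (motive := fun w => ⁅a, w⁆ ∈ T (n + 1 + 1)) hms ?_ ?_ ?_
            · rintro ⟨i, hi⟩ b hb
              exact Submodule.mem_iSup_of_mem ⟨j + i, by omega⟩ (hlie j i a ha b hb)
            · show ⁅a, (0 : L)⁆ ∈ T (n + 1 + 1)
              rw [lie_zero]; exact zero_mem _
            · intro u v hu hv
              show ⁅a, u + v⁆ ∈ T (n + 1 + 1)
              rw [lie_add]; exact add_mem hu hv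
          · show ⁅(0 : L), m⁆ ∈ T (n + 1 + 1)
            rw [zero_lie]; exact zero_mem _
          · intro u v hu hv
            show ⁅u + v, m⁆ ∈ T (n + 1 + 1)
            rw [add_lie]; exact add_mem hu hv
    have hTJ : T (N + 1) ≤ LieSubmodule.toSubmodule J := by
      refine iSup_le ?_
      rintro ⟨i, hi⟩
      exact hLcJ i (by omega)
    have hlcsJ : LieModule.lowerCentralSeries F L L N ≤ J := by
      rw [← LieSubmodule.toSubmodule_le_toSubmodule]
      exact le_trans (hlcs N) hTJ
    have hder : LieAlgebra.derivedSeries F L N ≤ J :=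
      le_trans (LieModule.derivedSeries_le_lowerCentralSeries F L N) hlcsJ
    have hJJ : (⁅J, J⁆ : LieIdeal F L) ≤ ⊥ := by
      rw [LieSubmodule.lie_le_iff]
      intro a ha b hb
      rw [LieSubmodule.mem_bot]
      rw [hJdef, LieSubmodule.mem_inf] at ha hb
      exact ha.2 b hb.1
    have hfinal : LieAlgebra.derivedSeries F L (N + 1) = ⊥ := by
      rw [show LieAlgebra.derivedSeries F L (N + 1)
          = ⁅LieAlgebra.derivedSeries F L N, LieAlgebra.derivedSeries F L N⁆ from by
        simp [LieAlgebra.derivedSeries_def]]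
      exact le_bot_iff.mp (le_trans (LieSubmodule.mono_lie hder hder) hJJ)
    exact LieAlgebra.IsSolvable.mk hfinal
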